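/- arXiv:2408.04792 — 2 statements merged into one kernel-verified Lean document; each statement's English description precedes it below -/
import Mathlib

section
/- For every continuous t-norm · on [0,1] and every b ∈ [0,1], the infimum c = inf { bⁿ : n ∈ ℕ } of the ·-powers of b satisfies c · b = c; in particular c is idempotent (c · c = c). -/
/-- The fact `(0 : ℝ) ≤ 1`, enabling the complete lattice structure on `unitInterval`. -/
instance : Fact ((0:ℝ) ≤ 1) := ⟨zero_le_one⟩

/-- A continuous t-norm: a commutative, associative, monotone binary operation on the
real unit interval `[0,1]` with unit `1`, continuous w.r.t. the usual topology. -/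
structure ContinuousTNorm where
  mul : unitInterval → unitInterval → unitInterval
  mul_comm : ∀ x y, mul x y = mul y x
  mul_assoc : ∀ x y z, mul (mul x y) z = mul x (mul y z)
  mul_mono : ∀ x y z, y ≤ z → mul x y ≤ mul x z
  mul_one : ∀ x, mul x 1 = x
  continuous : Continuous fun p : unitInterval × unitInterval => mul p.1 p.2

/-- `B.pow b n` is the `n`-fold `·`-power of `b`, with `b⁰ = 1`. -/
def ContinuousTNorm.pow (B : ContinuousTNorm) (b : unitInterval) : ℕ → unitInterval
  | 0 => 1
  | n + 1 => B.mul b (B.pow b n)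

lemma pow_antitone (B : ContinuousTNorm) (b : unitInterval) :
    Antitone (B.pow b) := by
  apply antitone_nat_of_succ_le
  intro n
  show B.mul b (B.pow b n) ≤ B.pow b n
  calc B.mul b (B.pow b n) = B.mul (B.pow b n) b := B.mul_comm _ _
    _ ≤ B.mul (B.pow b n) 1 := B.mul_mono _ _ _ le_top
    _ = B.pow b n := B.mul_one _

/-- the infimum `c` of the `·`-powers of `b` satisfies `c · b = c`;
in particular `c` is idempotent. -/
theorem tnorm_iInf_pow_mul_self (B : ContinuousTNorm) (b c : unitInterval)
    (hc : c = ⨅ n : ℕ, B.pow b n) : B.mul c b = c ∧ B.mul c c = c := by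
  have htend : Filter.Tendsto (B.pow b) Filter.atTop (nhds c) := by
    rw [hc]; exact tendsto_atTop_iInf (pow_antitone B b)
  have hmul : ∀ x : unitInterval, Continuous (fun y => B.mul x y) := fun x =>
    B.continuous.comp (Continuous.prodMk_right x)
  have hcb : B.mul b c = c := by
    have h1 : Filter.Tendsto (fun n => B.mul b (B.pow b n)) Filter.atTop
        (nhds (B.mul b c)) := ((hmul b).tendsto c).comp htend
    have h2 : Filter.Tendsto (fun n => B.mul b (B.pow b n)) Filter.atTop (nhds c) := by
      have : (fun n => B.mul b (B.pow b n)) = fun n => B.pow b (n + 1) := rfl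
      rw [this]
      exact htend.comp (Filter.tendsto_add_atTop_nat 1)
    exact tendsto_nhds_unique h1 h2
  have hcpow : ∀ n, B.mul c (B.pow b n) = c := by
    intro n
    induction n with
    | zero => exact B.mul_one c
    | succ n ih =>
      show B.mul c (B.mul b (B.pow b n)) = c
      rw [← B.mul_assoc, B.mul_comm c b, hcb, ih]
  have hcc : B.mul c c = c := by
    have h1 : Filter.Tendsto (fun n => B.mul c (B.pow b n)) Filter.atTop
        (nhds (B.mul c c)) := ((hmul c).tendsto c).comp htend
    have h2 : Filter.Tendsto (fun n => B.mul c (B.pow b n)) Filter.atTop (nhds c) := by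
      simp_rw [hcpow]; exact tendsto_const_nhds
    exact tendsto_nhds_unique h1 h2
  exact ⟨by rw [B.mul_comm, hcb], hcc⟩
end

section
/- Let H be a totally ordered bounded Wajsberg hoop with least element 0. For all a, b ∈ H: if a·b = a, then a = 0 or b = 1. -/
/-! ## Hoops -/

/-- A hoop: a commutative monoid with an operation `→` (`himp`) satisfying
`x→x = 1`, `x·(x→y) = y·(y→x)` and `x→(y→z) = (x·y)→z`. -/
class Hoop (H : Type*) extends CommMonoid H where
  himp : H → H → H
  himp_self : ∀ x : H, himp x x = 1
  mul_himp_comm : ∀ x y : H, x * himp x y = y * himp y x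
  himp_himp : ∀ x y z : H, himp x (himp y z) = himp (x * y) z

namespace Hoop

variable {H : Type*} [Hoop H]

/-- The hoop order: `x ≤ y` iff `x → y = 1`. -/
def hle (x y : H) : Prop := himp x y = 1

/-- A filter of a hoop: a nonempty subset closed under `·` and upward closed
with respect to the hoop order. -/
def IsFilter (F : Set H) : Prop :=
  F.Nonempty ∧ (∀ x ∈ F, ∀ y ∈ F, x * y ∈ F) ∧ ∀ x ∈ F, ∀ y : H, hle x y → y ∈ F

end Hoop

namespace Hoop

variable {H : Type*} [Hoop H]

lemma my_star (x y : H) : himp (himp x y * x) y = 1 := by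
  rw [← himp_himp, himp_self]

lemma my_antisymm {x y : H} (h1 : himp x y = 1) (h2 : himp y x = 1) : x = y := by
  have := mul_himp_comm x y
  rw [h1, h2, mul_one, mul_one] at this
  exact this

lemma my_one_himp (y : H) : himp 1 y = y := by
  refine my_antisymm ?_ ?_
  · have := my_star 1 y
    rwa [mul_one] at this
  · rw [himp_himp, mul_one, himp_self]

lemma my_himp_one (x : H) : himp x 1 = 1 := by
  have h : x * himp x 1 = x := by
    rw [mul_himp_comm, my_one_himp, one_mul]
  have := my_star x 1
  rwa [mul_comm, h] at this

lemma my_mul_le (x y : H) : himp (y * x) x = 1 := by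
  rw [← himp_himp, himp_self, my_himp_one]

lemma my_key (total : ∀ x y : H, Hoop.hle x y ∨ Hoop.hle y x)
    (wajsberg : ∀ x y : H, himp (himp x y) y = himp (himp y x) x)
    {b x : H} (hbx : himp b x = x) : b = 1 ∨ x = 1 := by
  have h1 : himp (himp x b) b = 1 := by
    rw [← wajsberg, hbx, himp_self]
  have h2 : himp b (himp x b) = 1 := by
    rw [himp_himp, mul_comm, my_mul_le]
  have hxb : himp x b = b := my_antisymm h1 h2
  rcases total x b with h | h
  · left; rw [← hxb]; exact h
  · right; rw [← hbx]; exact h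

end Hoop

/-- in a totally ordered bounded Wajsberg hoop with least element `z`,
if `a·b = a` then `a = z` or `b = 1`. -/
theorem bounded_wajsberg_mul_eq (H : Type*) [Hoop H]
    (total : ∀ x y : H, Hoop.hle x y ∨ Hoop.hle y x)
    (wajsberg : ∀ x y : H, Hoop.himp (Hoop.himp x y) y = Hoop.himp (Hoop.himp y x) x)
    (z : H) (hz : ∀ x : H, Hoop.hle z x)
    (a b : H) (h : a * b = a) :
    a = z ∨ b = 1 := by
  have hbx : Hoop.himp b (Hoop.himp a z) = Hoop.himp a z := by
    rw [Hoop.himp_himp, mul_comm, h]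
  rcases Hoop.my_key total wajsberg hbx with hb | hx
  · exact Or.inr hb
  · exact Or.inl (Hoop.my_antisymm hx (hz a))
end
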